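/- For any languages L over Σ and nonempty languages K₁,…,Kₙ, the downward closure commutes with substitution: ↓(ρ(L)) = ρ'(↓(L)), where ρ substitutes each letter a_i by K_i and ρ' substitutes each a_i by ↓(K_i). -/

import Mathlib

def dcl {β : Type*} (L : Set (List β)) : Set (List β) :=
  {x | ∃ y ∈ L, x.Sublist y}

def subst {A β : Type*} (K : A → Set (List β)) : List A → Set (List β)
  | [] => {[]}
  | i :: w => Set.image2 (· ++ ·) (K i) (subst K w)

lemma mem_subst_dcl {A β : Type*} (K : A → Set (List β)) :
    ∀ (w : List A) (x y : List β), y ∈ subst K w → x.Sublist y →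
      x ∈ subst (fun i => dcl (K i)) w
  | [], x, y, hy, hxy => by
      simp only [subst, Set.mem_singleton_iff] at hy
      subst hy
      simpa [subst] using List.sublist_nil.mp hxy
  | i :: w, x, y, hy, hxy => by
      obtain ⟨a, ha, b, hb, rfl⟩ := hy
      obtain ⟨x₁, x₂, rfl, h₁, h₂⟩ := List.sublist_append_iff.mp hxy
      exact ⟨x₁, ⟨a, ha, h₁⟩, x₂, mem_subst_dcl K w x₂ b hb h₂, rfl⟩

lemma subst_dcl_sublist {A β : Type*} (K : A → Set (List β))
    (hK : ∀ i, (K i).Nonempty) {w' w : List A} (hw : w'.Sublist w) :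
    ∀ x ∈ subst (fun i => dcl (K i)) w', ∃ y ∈ subst K w, x.Sublist y := by
  induction hw with
  | slnil =>
      intro x hx
      simp only [subst, Set.mem_singleton_iff] at hx
      exact ⟨[], rfl, by simp [hx]⟩
  | cons i h ih =>
      intro x hx
      obtain ⟨y, hy, hxy⟩ := ih x hx
      obtain ⟨z, hz⟩ := hK i
      exact ⟨z ++ y, ⟨z, hz, y, hy, rfl⟩, hxy.trans (List.sublist_append_right z y)⟩
  | cons_cons i h ih =>
      intro x hx
      obtain ⟨a, ⟨a', ha', haa'⟩, b, hb, rfl⟩ := hx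
      obtain ⟨y, hy, hby⟩ := ih b hb
      exact ⟨a' ++ y, ⟨a', ha', y, hy, rfl⟩, haa'.append hby⟩

/-- Downward closure commutes with substitution (for nonempty `K i`). -/
theorem dcl_subst_comm {A β : Type*} (K : A → Set (List β))
    (hK : ∀ i, (K i).Nonempty) (L : Set (List A)) :
    dcl (⋃ w ∈ L, subst K w) = ⋃ w ∈ dcl L, subst (fun i => dcl (K i)) w := by
  ext x
  constructor
  · rintro ⟨y, hy, hxy⟩
    simp only [Set.mem_iUnion] at hy ⊢
    obtain ⟨w, hw, hyw⟩ := hy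
    exact ⟨w, ⟨w, hw, List.Sublist.refl w⟩, mem_subst_dcl K w x y hyw hxy⟩
  · intro hx
    simp only [Set.mem_iUnion] at hx
    obtain ⟨w', ⟨w, hw, hw'w⟩, hxw'⟩ := hx
    obtain ⟨y, hy, hxy⟩ := subst_dcl_sublist K hK hw'w x hxw'
    exact ⟨y, Set.mem_iUnion₂.mpr ⟨w, hw, hy⟩, hxy⟩
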